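/- For an irrational real number s, limsup_{|t|→∞} log α₁(h_t Λ_s)/log|t| = 1 if and only if s is a Liouville number (i.e., μ(s) = ∞). -/

import Mathlib

open MeasureTheory Filter Matrix Real ENNReal

noncomputable section

/-- `SL(n, ℝ)`. -/
abbrev SLR (n : ℕ) := Matrix.SpecialLinearGroup (Fin n) ℝ

instance (n : ℕ) : TopologicalSpace (SLR n) :=
  TopologicalSpace.induced (fun g => (g : Matrix (Fin n) (Fin n) ℝ)) inferInstance

/-- The image of `SL(n, ℤ)` in `SL(n, ℝ)`. -/
def latticeGamma (n : ℕ) : Subgroup (SLR n) :=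
  (Matrix.SpecialLinearGroup.map (n := Fin n) (Int.castRingHom ℝ)).range

/-- The space of unimodular lattices `X_n = SL(n,ℝ)/SL(n,ℤ)`. -/
abbrev LatticeSpace (n : ℕ) := SLR n ⧸ latticeGamma n

instance (n : ℕ) : MeasurableSpace (LatticeSpace n) := borel _

/-- The real vector `g · m` of the lattice `g ℤⁿ` coming from the integer vector `m`. -/
def vecOf (n : ℕ) (g : SLR n) (m : Fin n → ℤ) : Fin n → ℝ :=
  (g : Matrix (Fin n) (Fin n) ℝ).mulVec (fun i => (m i : ℝ))

/-- Euclidean norm on `Fin n → ℝ`. -/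
def eNorm {n : ℕ} (v : Fin n → ℝ) : ℝ := ‖(WithLp.equiv 2 (Fin n → ℝ)).symm v‖

/-- The lattice `Λ` contains a nonzero vector lying in `A`. -/
def Intersects (n : ℕ) (Λ : LatticeSpace n) (A : Set (Fin n → ℝ)) : Prop :=
  ∀ g : SLR n, (QuotientGroup.mk g : LatticeSpace n) = Λ →
    ∃ m : Fin n → ℤ, m ≠ 0 ∧ vecOf n g m ∈ A

/-- `α₁(Λ) = sup_{0 ≠ v ∈ Λ} 1/‖v‖` (Euclidean norm). -/
def alpha1 (n : ℕ) (Λ : LatticeSpace n) : ℝ :=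
  sSup {r : ℝ | ∃ g : SLR n, (QuotientGroup.mk g : LatticeSpace n) = Λ ∧
    ∃ m : Fin n → ℤ, m ≠ 0 ∧ r = 1 / eNorm (vecOf n g m)}

/-- The horocycle matrix `h_t = [[1,t],[0,1]]`. -/
def hMat (t : ℝ) : SLR 2 := ⟨!![1, t; 0, 1], by simp [Matrix.det_fin_two_of]⟩

/-- The matrix `[[1,0],[s,1]]`, so that `gMat s · ℤ² = Λ_s = {(m, sm+n)}`. -/
def gMat (s : ℝ) : SLR 2 := ⟨!![1, 0; s, 1], by simp [Matrix.det_fin_two_of]⟩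

/-- The point `Λ_s` of the space of lattices. -/
def LambdaS (s : ℝ) : LatticeSpace 2 := QuotientGroup.mk (gMat s)

/-- The approximation exponent `μ(s)`, valued in `[0,∞]`:
the sup of all `ν` such that `|s - p/q| < q^{-ν}` has infinitely many rational solutions. -/
def approxExp (s : ℝ) : ℝ≥0∞ :=
  ⨆ (ν : ℝ) (_ : {pq : ℤ × ℕ+ |
    |s - (pq.1 : ℝ) / ((pq.2 : ℕ) : ℝ)| < ((pq.2 : ℕ) : ℝ) ^ (-ν)}.Infinite),
    ENNReal.ofReal ν


lemma eNorm_eq (v : Fin 2 → ℝ) : eNorm v = Real.sqrt (v 0 ^ 2 + v 1 ^ 2) := by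
  rw [eNorm, EuclideanSpace.norm_eq]
  simp [Fin.sum_univ_two, sq_abs]

lemma abs_fst_le_eNorm (v : Fin 2 → ℝ) : |v 0| ≤ eNorm v := by
  rw [eNorm_eq, ← Real.sqrt_sq_eq_abs]
  exact Real.sqrt_le_sqrt (by nlinarith [sq_nonneg (v 1)])

lemma abs_snd_le_eNorm (v : Fin 2 → ℝ) : |v 1| ≤ eNorm v := by
  rw [eNorm_eq, ← Real.sqrt_sq_eq_abs]
  exact Real.sqrt_le_sqrt (by nlinarith [sq_nonneg (v 0)])

lemma eNorm_le_add (v : Fin 2 → ℝ) : eNorm v ≤ |v 0| + |v 1| := by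
  rw [eNorm_eq]
  rw [show |v 0| + |v 1| = Real.sqrt ((|v 0| + |v 1|)^2) from
    (Real.sqrt_sq (by positivity)).symm]
  apply Real.sqrt_le_sqrt
  have := abs_nonneg (v 0); have := abs_nonneg (v 1)
  nlinarith [sq_abs (v 0), sq_abs (v 1), mul_nonneg (abs_nonneg (v 0)) (abs_nonneg (v 1))]

lemma vecOf_htgs (s t : ℝ) (m : Fin 2 → ℤ) :
    vecOf 2 (hMat t * gMat s) m =
      ![(m 0 : ℝ) + t * (s * m 0 + m 1), s * m 0 + m 1] := by
  rw [vecOf, Matrix.SpecialLinearGroup.coe_mul]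
  funext i
  fin_cases i <;>
    simp [vecOf, hMat, gMat, Matrix.SpecialLinearGroup.coe_mul, Matrix.mulVec,
      dotProduct, Fin.sum_univ_two, Matrix.mul_apply] <;> ring

lemma int_mulVec_ne_zero (γ : Matrix.SpecialLinearGroup (Fin 2) ℤ) {m : Fin 2 → ℤ}
    (hm : m ≠ 0) : (γ : Matrix (Fin 2) (Fin 2) ℤ).mulVec m ≠ 0 := by
  intro h
  apply hm
  have h2 : ((γ⁻¹ : Matrix.SpecialLinearGroup (Fin 2) ℤ) : Matrix (Fin 2) (Fin 2) ℤ).mulVec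
      ((γ : Matrix (Fin 2) (Fin 2) ℤ).mulVec m) = m := by
    rw [Matrix.mulVec_mulVec, ← Matrix.SpecialLinearGroup.coe_mul, inv_mul_cancel,
      Matrix.SpecialLinearGroup.coe_one, Matrix.one_mulVec]
  rw [h, Matrix.mulVec_zero] at h2
  exact h2.symm

lemma vecOf_mul_map (g : SLR 2) (γ : Matrix.SpecialLinearGroup (Fin 2) ℤ) (m : Fin 2 → ℤ) :
    vecOf 2 (g * Matrix.SpecialLinearGroup.map (Int.castRingHom ℝ) γ) m =
      vecOf 2 g ((γ : Matrix (Fin 2) (Fin 2) ℤ).mulVec m) := by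
  unfold vecOf
  rw [Matrix.SpecialLinearGroup.coe_mul, ← Matrix.mulVec_mulVec]
  congr 1
  funext i
  simp [Matrix.SpecialLinearGroup.map_apply_coe, Matrix.mulVec, dotProduct, Fin.sum_univ_two]

lemma alphaSet_eq (g : SLR 2) :
    {r : ℝ | ∃ g' : SLR 2, (QuotientGroup.mk g' : LatticeSpace 2) = QuotientGroup.mk g ∧
        ∃ m : Fin 2 → ℤ, m ≠ 0 ∧ r = 1 / eNorm (vecOf 2 g' m)} =
      {r : ℝ | ∃ m : Fin 2 → ℤ, m ≠ 0 ∧ r = 1 / eNorm (vecOf 2 g m)} := by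
  ext r
  constructor
  · rintro ⟨g', hg', m, hm, rfl⟩
    have h1 : g'⁻¹ * g ∈ latticeGamma 2 := (QuotientGroup.eq (s := latticeGamma 2)).mp hg'
    obtain ⟨γ₀, hγ₀⟩ := h1
    have hg'eq : g' = g * Matrix.SpecialLinearGroup.map (Int.castRingHom ℝ) γ₀⁻¹ := by
      rw [map_inv, hγ₀]
      group
    refine ⟨((γ₀⁻¹ : Matrix.SpecialLinearGroup (Fin 2) ℤ) :
        Matrix (Fin 2) (Fin 2) ℤ).mulVec m, int_mulVec_ne_zero _ hm, ?_⟩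
    rw [hg'eq, vecOf_mul_map]
  · rintro ⟨m, hm, rfl⟩
    exact ⟨g, rfl, m, hm, rfl⟩

lemma key_lower (s t : ℝ) {m : Fin 2 → ℤ} (hm : m ≠ 0) :
    1 ≤ 2 * (1 + |s|) * (1 + |t|) * eNorm (vecOf 2 (hMat t * gMat s) m) := by
  set v := vecOf 2 (hMat t * gMat s) m with hv
  have h0 : v 0 = (m 0 : ℝ) + t * (s * m 0 + m 1) := by rw [hv, vecOf_htgs]; rfl
  have h1 : v 1 = s * m 0 + m 1 := by rw [hv, vecOf_htgs]; rfl
  have hE0 : |v 0| ≤ eNorm v := abs_fst_le_eNorm v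
  have hE1 : |v 1| ≤ eNorm v := abs_snd_le_eNorm v
  have hEnn : 0 ≤ eNorm v := le_trans (abs_nonneg _) hE0
  have ha : |(m 0 : ℝ)| ≤ |v 0| + |t| * |v 1| := by
    have he : (m 0 : ℝ) = v 0 - t * v 1 := by rw [h0, h1]; ring
    rw [he]
    calc |v 0 - t * v 1| ≤ |v 0| + |t * v 1| := abs_sub _ _
      _ = |v 0| + |t| * |v 1| := by rw [abs_mul]
  have hb : |(m 1 : ℝ)| ≤ |s| * |v 0| + (1 + |s| * |t|) * |v 1| := by
    have he : (m 1 : ℝ) = v 1 - s * v 0 + s * (t * v 1) := by rw [h0, h1]; ring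
    rw [he]
    calc |v 1 - s * v 0 + s * (t * v 1)| ≤ |v 1 - s * v 0| + |s * (t * v 1)| := abs_add_le _ _
      _ ≤ |v 1| + |s * v 0| + |s * (t * v 1)| := by
          have := abs_sub (v 1) (s * v 0); linarith
      _ ≤ |s| * |v 0| + (1 + |s| * |t|) * |v 1| := by
          rw [abs_mul, abs_mul, abs_mul]; ring_nf; nlinarith [abs_nonneg (v 1)]
  obtain ⟨i, hi⟩ := Function.ne_iff.mp hm
  have h1le : (1 : ℝ) ≤ |(m i : ℝ)| := by
    rw [← Int.cast_abs]
    exact_mod_cast Int.one_le_abs hi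
  have hs0 := abs_nonneg s
  have ht0 := abs_nonneg t
  fin_cases i
  · have h1le' : (1 : ℝ) ≤ |(m 0 : ℝ)| := h1le
    nlinarith [mul_le_mul_of_nonneg_left hE1 ht0, mul_nonneg hs0 hEnn,
      mul_nonneg (mul_nonneg hs0 ht0) hEnn]
  · have h1le' : (1 : ℝ) ≤ |(m 1 : ℝ)| := h1le
    nlinarith [mul_le_mul_of_nonneg_left hE0 hs0,
      mul_le_mul_of_nonneg_left hE1 (mul_nonneg hs0 ht0), mul_nonneg ht0 hEnn]

lemma eNorm_pos (s t : ℝ) {m : Fin 2 → ℤ} (hm : m ≠ 0) :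
    0 < eNorm (vecOf 2 (hMat t * gMat s) m) := by
  have h := key_lower s t hm
  by_contra hc
  push_neg at hc
  have hs0 := abs_nonneg s; have ht0 := abs_nonneg t
  have hC : (0:ℝ) < 2 * (1 + |s|) * (1 + |t|) := by positivity
  nlinarith [mul_nonpos_of_nonneg_of_nonpos hC.le hc]

def aSet (s t : ℝ) : Set ℝ :=
  {r : ℝ | ∃ m : Fin 2 → ℤ, m ≠ 0 ∧ r = 1 / eNorm (vecOf 2 (hMat t * gMat s) m)}

lemma alpha1_eq (s t : ℝ) :
    alpha1 2 (QuotientGroup.mk (hMat t * gMat s)) = sSup (aSet s t) := by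
  rw [alpha1, alphaSet_eq]; rfl

lemma m01_ne : (![0, 1] : Fin 2 → ℤ) ≠ 0 := by
  intro h
  simpa using congrFun h 1

lemma mem_aSet_01 (s t : ℝ) : 1 / Real.sqrt (t ^ 2 + 1) ∈ aSet s t := by
  refine ⟨![0, 1], m01_ne, ?_⟩
  have hv : vecOf 2 (hMat t * gMat s) ![0, 1] = ![t, 1] := by
    rw [vecOf_htgs]
    norm_num
  rw [hv, eNorm_eq]
  norm_num

lemma bddAbove_aSet (s t : ℝ) : BddAbove (aSet s t) := by
  refine ⟨2 * (1 + |s|) * (1 + |t|), ?_⟩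
  rintro r ⟨m, hm, rfl⟩
  have hE := eNorm_pos s t hm
  rw [div_le_iff₀ hE]
  exact key_lower s t hm

lemma aSet_nonempty (s t : ℝ) : (aSet s t).Nonempty := ⟨_, mem_aSet_01 s t⟩

lemma alpha1_le_bound (s t : ℝ) :
    alpha1 2 (QuotientGroup.mk (hMat t * gMat s)) ≤ 2 * (1 + |s|) * (1 + |t|) := by
  rw [alpha1_eq]
  apply csSup_le (aSet_nonempty s t)
  rintro r ⟨m, hm, rfl⟩
  have hE := eNorm_pos s t hm
  rw [div_le_iff₀ hE]
  exact key_lower s t hm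

lemma le_alpha1 (s t : ℝ) {r : ℝ} (hr : r ∈ aSet s t) :
    r ≤ alpha1 2 (QuotientGroup.mk (hMat t * gMat s)) := by
  rw [alpha1_eq]
  exact le_csSup (bddAbove_aSet s t) hr

lemma alpha1_ge_sqrt (s t : ℝ) :
    1 / Real.sqrt (t ^ 2 + 1) ≤ alpha1 2 (QuotientGroup.mk (hMat t * gMat s)) :=
  le_alpha1 s t (mem_aSet_01 s t)

lemma alpha1_pos (s t : ℝ) : 0 < alpha1 2 (QuotientGroup.mk (hMat t * gMat s)) := by
  have h := alpha1_ge_sqrt s t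
  have h2 : 0 < 1 / Real.sqrt (t ^ 2 + 1) := by positivity
  linarith

section FilterStuff

instance absFilter_neBot : (Filter.comap (fun t : ℝ => |t|) atTop).NeBot :=
  Filter.neBot_of_le (tendsto_abs_atTop_atTop.le_comap)

lemma eventually_absFilter {p : ℝ → Prop} (h : ∃ a : ℝ, ∀ t, a ≤ |t| → p t) :
    ∀ᶠ t in Filter.comap (fun t : ℝ => |t|) atTop, p t := by
  obtain ⟨a, ha⟩ := h
  have hmem : (fun t : ℝ => |t|) ⁻¹' (Set.Ici a) ∈ Filter.comap (fun t : ℝ => |t|) atTop :=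
    Filter.preimage_mem_comap (mem_atTop a)
  exact Filter.mem_of_superset hmem ha

lemma frequently_absFilter {p : ℝ → Prop} (h : ∀ a : ℝ, ∃ t, a ≤ |t| ∧ p t) :
    ∃ᶠ t in Filter.comap (fun t : ℝ => |t|) atTop, p t := by
  rw [Filter.frequently_iff]
  intro U hU
  rw [Filter.mem_comap] at hU
  obtain ⟨A, hA, hAU⟩ := hU
  obtain ⟨a, ha⟩ := Filter.mem_atTop_sets.mp hA
  obtain ⟨t, hta, hpt⟩ := h a
  exact ⟨t, hAU (ha _ hta), hpt⟩

lemma my_limsup_le {f : ℝ → ℝ} {a : ℝ}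
    (hev : ∀ᶠ t in Filter.comap (fun t : ℝ => |t|) atTop, f t ≤ a)
    (hlb : ∀ᶠ t in Filter.comap (fun t : ℝ => |t|) atTop, -2 ≤ f t) :
    Filter.limsup f (Filter.comap (fun t : ℝ => |t|) atTop) ≤ a := by
  rw [Filter.limsup_eq]
  apply csInf_le
  · refine ⟨-2, fun b hb => ?_⟩
    have hb' : ∀ᶠ t in Filter.comap (fun t : ℝ => |t|) atTop, f t ≤ b := hb
    obtain ⟨t, h1, h2⟩ := (hb'.and hlb).exists
    linarith
  · exact hev

lemma le_my_limsup {f : ℝ → ℝ} {b : ℝ}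
    (hfreq : ∃ᶠ t in Filter.comap (fun t : ℝ => |t|) atTop, b ≤ f t)
    (hub : ∀ᶠ t in Filter.comap (fun t : ℝ => |t|) atTop, f t ≤ 2) :
    b ≤ Filter.limsup f (Filter.comap (fun t : ℝ => |t|) atTop) := by
  rw [Filter.limsup_eq]
  refine le_csInf ⟨2, hub⟩ ?_
  intro a ha
  have ha' : ∀ᶠ t in Filter.comap (fun t : ℝ => |t|) atTop, f t ≤ a := ha
  obtain ⟨t, h1, h2⟩ := (ha'.and_frequently hfreq).exists
  linarith

end FilterStuff

lemma F_ge_neg_two (s t : ℝ) (ht : 2 ≤ |t|) :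
    -2 ≤ Real.log (alpha1 2 (QuotientGroup.mk (hMat t * gMat s))) / Real.log |t| := by
  have hlt : (1 : ℝ) < |t| := by linarith
  have hlog : 0 < Real.log |t| := Real.log_pos hlt
  have ht2 : (4 : ℝ) ≤ t ^ 2 := by
    have := sq_abs t
    nlinarith [abs_nonneg t]
  have h1 : Real.sqrt (t ^ 2 + 1) ≤ t ^ 2 := by
    have h2 : t ^ 2 + 1 ≤ (t ^ 2) ^ 2 := by nlinarith
    calc Real.sqrt (t ^ 2 + 1) ≤ Real.sqrt ((t ^ 2) ^ 2) := Real.sqrt_le_sqrt h2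
      _ = t ^ 2 := Real.sqrt_sq (by positivity)
  have hsq : 0 < Real.sqrt (t ^ 2 + 1) := by positivity
  have hα : 1 / t ^ 2 ≤ alpha1 2 (QuotientGroup.mk (hMat t * gMat s)) :=
    le_trans (one_div_le_one_div_of_le hsq h1) (alpha1_ge_sqrt s t)
  have hpos : (0 : ℝ) < 1 / t ^ 2 := by positivity
  have hlogα : -(2 * Real.log |t|) ≤
      Real.log (alpha1 2 (QuotientGroup.mk (hMat t * gMat s))) := by
    have h3 := Real.log_le_log hpos hα
    have h4 : Real.log (1 / t ^ 2) = -(2 * Real.log |t|) := by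
      rw [one_div, Real.log_inv, ← sq_abs, Real.log_pow]
      push_cast; ring
    linarith [h4 ▸ h3]
  rw [le_div_iff₀ hlog]
  linarith

lemma F_le_one_add (s : ℝ) {ε : ℝ} (hε : 0 < ε) :
    ∃ T : ℝ, ∀ t, T ≤ |t| →
      Real.log (alpha1 2 (QuotientGroup.mk (hMat t * gMat s))) / Real.log |t| ≤ 1 + ε := by
  set C : ℝ := 4 * (1 + |s|) with hCdef
  have hC1 : (1 : ℝ) < C := by have := abs_nonneg s; simp only [hCdef]; nlinarith
  have hlogC : 0 < Real.log C := Real.log_pos hC1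
  refine ⟨max 2 (Real.exp (Real.log C / ε)), fun t ht => ?_⟩
  have ht2 : 2 ≤ |t| := le_trans (le_max_left _ _) ht
  have hlog : 0 < Real.log |t| := Real.log_pos (by linarith)
  have hαpos := alpha1_pos s t
  have hα : alpha1 2 (QuotientGroup.mk (hMat t * gMat s)) ≤ C * |t| := by
    have h1 := alpha1_le_bound s t
    have := abs_nonneg s
    nlinarith
  have hlogα : Real.log (alpha1 2 (QuotientGroup.mk (hMat t * gMat s))) ≤
      Real.log C + Real.log |t| := by
    have h2 := Real.log_le_log hαpos hα
    rwa [Real.log_mul (by linarith) (by linarith)] at h2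
  have hexp : Real.log C / ε ≤ Real.log |t| := by
    have h3 : Real.exp (Real.log C / ε) ≤ |t| := le_trans (le_max_right _ _) ht
    have h4 := Real.log_le_log (Real.exp_pos _) h3
    rwa [Real.log_exp] at h4
  have h5 : Real.log C ≤ ε * Real.log |t| := by
    rw [div_le_iff₀ hε] at hexp
    linarith [hexp]
  rw [div_le_iff₀ hlog]
  linarith

def badSet (s ν : ℝ) : Set (ℤ × ℕ+) :=
  {pq : ℤ × ℕ+ | |s - (pq.1 : ℝ) / ((pq.2 : ℕ) : ℝ)| < ((pq.2 : ℕ) : ℝ) ^ (-ν)}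

lemma approxExp_eq (s : ℝ) :
    approxExp s = ⨆ (ν : ℝ) (_ : (badSet s ν).Infinite), ENNReal.ofReal ν := rfl

lemma one_le_q (q : ℕ+) : (1 : ℝ) ≤ ((q : ℕ) : ℝ) := by exact_mod_cast q.one_le

lemma badSet_mono (s : ℝ) {ν ν' : ℝ} (h : ν ≤ ν') : badSet s ν' ⊆ badSet s ν := by
  rintro ⟨p, q⟩ hpq
  simp only [badSet, Set.mem_setOf_eq] at hpq ⊢
  exact lt_of_lt_of_le hpq
    (Real.rpow_le_rpow_of_exponent_le (one_le_q q) (by linarith))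

lemma badSet_infinite_of_top {s : ℝ} (h : approxExp s = ⊤) (ν : ℝ) :
    (badSet s ν).Infinite := by
  by_contra hfin
  rw [Set.not_infinite] at hfin
  have hle : approxExp s ≤ ENNReal.ofReal ν := by
    rw [approxExp_eq]
    refine iSup_le fun ν' => iSup_le fun h' => ?_
    rcases le_or_gt ν' ν with hc | hc
    · exact ENNReal.ofReal_le_ofReal hc
    · exact absurd (hfin.subset (badSet_mono s hc.le)) h'
  rw [h] at hle
  exact absurd (top_le_iff.mp hle) ENNReal.ofReal_ne_top

lemma badSet_finite_of_ne_top {s : ℝ} (h : approxExp s ≠ ⊤) :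
    ∃ ν : ℝ, 3 ≤ ν ∧ (badSet s ν).Finite := by
  obtain ⟨n, hn⟩ := ENNReal.exists_nat_gt h
  refine ⟨max (n : ℝ) 3, le_max_right _ _, ?_⟩
  by_contra hinf
  rw [← Set.not_infinite, not_not] at hinf
  have h1 : ENNReal.ofReal (max (n : ℝ) 3) ≤ approxExp s := by
    rw [approxExp_eq]
    exact le_iSup₂ (f := fun (ν : ℝ) (_ : (badSet s ν).Infinite) => ENNReal.ofReal ν)
      (max (n : ℝ) 3) hinf
  have h2 : (n : ℝ≥0∞) ≤ ENNReal.ofReal (max (n : ℝ) 3) := by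
    rw [← ENNReal.ofReal_natCast n]
    exact ENNReal.ofReal_le_ofReal (le_max_left _ _)
  exact absurd ((h2.trans h1).trans_lt hn) (lt_irrefl _)

lemma p_bound {s ν : ℝ} (hν : 0 ≤ ν) {p : ℤ} {q : ℕ+}
    (h : (p, q) ∈ badSet s ν) : |(p : ℝ)| ≤ ((q : ℕ) : ℝ) * (|s| + 1) := by
  simp only [badSet, Set.mem_setOf_eq] at h
  have hq1 : (1 : ℝ) ≤ ((q : ℕ) : ℝ) := one_le_q q
  have hq0 : (0 : ℝ) < ((q : ℕ) : ℝ) := by linarith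
  have hle1 : ((q : ℕ) : ℝ) ^ (-ν) ≤ 1 :=
    Real.rpow_le_one_of_one_le_of_nonpos hq1 (by linarith)
  have h2 : |s - (p : ℝ) / ((q : ℕ) : ℝ)| < 1 := lt_of_lt_of_le h hle1
  have h3 : |(p : ℝ) / ((q : ℕ) : ℝ)| ≤ |s| + 1 := by
    have := abs_sub_abs_le_abs_sub ((p : ℝ) / ((q : ℕ) : ℝ)) s
    rw [abs_sub_comm] at this
    linarith
  rw [abs_div, abs_of_pos hq0, div_le_iff₀ hq0] at h3
  calc |(p : ℝ)| ≤ (|s| + 1) * ((q : ℕ) : ℝ) := h3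
    _ = ((q : ℕ) : ℝ) * (|s| + 1) := by ring

lemma badSet_bounded_finite (s ν : ℝ) (hν : 0 ≤ ν) (M : ℕ) :
    {pq ∈ badSet s ν | (pq.2 : ℕ) ≤ M}.Finite := by
  have hB : ∀ pq ∈ {pq ∈ badSet s ν | (pq.2 : ℕ) ≤ M},
      pq.1 ∈ Set.Icc (-(⌈(M : ℝ) * (|s| + 1)⌉)) ⌈(M : ℝ) * (|s| + 1)⌉ ∧
      pq.2 ∈ Set.Icc (1 : ℕ+) ⟨M + 1, Nat.succ_pos M⟩ := by
    rintro ⟨p, q⟩ ⟨h1, h2⟩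
    have hp := p_bound hν h1
    have hq : ((q : ℕ) : ℝ) ≤ (M : ℝ) := by exact_mod_cast h2
    have hs1 : (0 : ℝ) ≤ |s| + 1 := by positivity
    have hp2 : |(p : ℝ)| ≤ (M : ℝ) * (|s| + 1) := by nlinarith [one_le_q q]
    have hp3 : |(p : ℝ)| ≤ (⌈(M : ℝ) * (|s| + 1)⌉ : ℝ) := hp2.trans (Int.le_ceil _)
    have hp4 : |p| ≤ ⌈(M : ℝ) * (|s| + 1)⌉ := by
      have : ((|p| : ℤ) : ℝ) ≤ (⌈(M : ℝ) * (|s| + 1)⌉ : ℝ) := by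
        rw [Int.cast_abs]; exact hp3
      exact_mod_cast this
    refine ⟨abs_le.mp hp4, q.one_le, ?_⟩
    show (q : ℕ+) ≤ ⟨M + 1, Nat.succ_pos M⟩
    apply (PNat.coe_le_coe _ _).mp
    simpa using Nat.le_succ_of_le h2
  have hfin : (Set.Icc (-(⌈(M : ℝ) * (|s| + 1)⌉)) ⌈(M : ℝ) * (|s| + 1)⌉ ×ˢ
      Set.Icc (1 : ℕ+) ⟨M + 1, Nat.succ_pos M⟩).Finite :=
    (Set.finite_Icc _ _).prod (Set.finite_Icc _ _)
  exact hfin.subset fun pq hpq => ⟨(hB pq hpq).1, (hB pq hpq).2⟩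

lemma exists_large_q {s ν : ℝ} (hν : 0 ≤ ν) (hinf : (badSet s ν).Infinite) (M : ℕ) :
    ∃ pq ∈ badSet s ν, M < (pq.2 : ℕ) := by
  by_contra hc
  push_neg at hc
  exact hinf ((badSet_bounded_finite s ν hν M).subset fun pq hpq => ⟨hpq, hc pq hpq⟩)

lemma round_min (x : ℝ) (p : ℤ) : |x - round x| ≤ |x - p| := by
  by_cases hp : p = round x
  · rw [hp]
  · have h1 : |x - round x| ≤ 1 / 2 := abs_sub_round x
    have h2 : (1 : ℝ) ≤ |(p : ℝ) - (round x : ℝ)| := by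
      have : (1 : ℤ) ≤ |p - round x| := Int.one_le_abs (sub_ne_zero.mpr hp)
      have h3 : ((|p - round x| : ℤ) : ℝ) = |(p : ℝ) - (round x : ℝ)| := by
        push_cast [Int.cast_abs]; ring_nf
      exact_mod_cast h3 ▸ (Int.cast_le.mpr this)
    have h4 : |(p : ℝ) - round x| ≤ |x - p| + |x - round x| := by
      have := abs_sub ((p : ℝ) - x) (round x - x)
      have he : (p : ℝ) - x - ((round x : ℝ) - x) = (p : ℝ) - round x := by ring
      rw [he] at this
      rw [abs_sub_comm x p, abs_sub_comm x (round x : ℝ)]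
      linarith [this]
    linarith

lemma small_q_bound {s : ℝ} (hs : Irrational s) (Q : ℕ) :
    ∃ δ : ℝ, 0 < δ ∧ δ ≤ 1 ∧
      ∀ q : ℤ, q ≠ 0 → |q| ≤ (Q : ℤ) → ∀ p : ℤ, δ ≤ |(q : ℝ) * s - p| := by
  set D : Finset ℤ := (Finset.Icc (-(Q : ℤ)) Q).erase 0 with hD
  by_cases hne : D.Nonempty
  · set δ0 : ℝ := D.inf' hne (fun q => |(q : ℝ) * s - round ((q : ℝ) * s)|) with hδ0
    have hpos : 0 < δ0 := by
      rw [hδ0, Finset.lt_inf'_iff]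
      intro q hq
      have hq0 : q ≠ 0 := (Finset.mem_erase.mp hq).1
      have hirr : Irrational ((q : ℝ) * s) := hs.intCast_mul hq0
      have hne2 : (q : ℝ) * s ≠ (round ((q : ℝ) * s) : ℝ) := hirr.ne_int _
      exact abs_pos.mpr (sub_ne_zero.mpr hne2)
    refine ⟨min δ0 1, lt_min hpos one_pos, min_le_right _ _, ?_⟩
    intro q hq0 hqQ p
    have hqD : q ∈ D := by
      rw [hD, Finset.mem_erase]
      exact ⟨hq0, Finset.mem_Icc.mpr (abs_le.mp hqQ)⟩
    calc min δ0 1 ≤ δ0 := min_le_left _ _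
      _ ≤ |(q : ℝ) * s - round ((q : ℝ) * s)| := Finset.inf'_le _ hqD
      _ ≤ |(q : ℝ) * s - p| := round_min _ _
  · refine ⟨1, one_pos, le_refl _, ?_⟩
    intro q hq0 hqQ p
    exact absurd ⟨q, by rw [hD, Finset.mem_erase]; exact ⟨hq0, Finset.mem_Icc.mpr (abs_le.mp hqQ)⟩⟩ hne

lemma key_mul (s ν : ℝ) (n : ℕ+) (p : ℤ)
    (h : ((n : ℕ) : ℝ) ^ (-ν) ≤ |s - (p : ℝ) / ((n : ℕ) : ℝ)|) :
    ((n : ℕ) : ℝ) ^ (1 - ν) ≤ |((n : ℕ) : ℝ) * s - p| := by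
  have hn : (0 : ℝ) < ((n : ℕ) : ℝ) := by exact_mod_cast n.pos
  have h1 : ((n : ℕ) : ℝ) * ((n : ℕ) : ℝ) ^ (-ν) ≤
      ((n : ℕ) : ℝ) * |s - (p : ℝ) / ((n : ℕ) : ℝ)| := mul_le_mul_of_nonneg_left h hn.le
  have h2 : ((n : ℕ) : ℝ) * ((n : ℕ) : ℝ) ^ (-ν) = ((n : ℕ) : ℝ) ^ (1 - ν) := by
    rw [show (1 : ℝ) - ν = 1 + (-ν) by ring, Real.rpow_add hn, Real.rpow_one]
  have h3 : ((n : ℕ) : ℝ) * |s - (p : ℝ) / ((n : ℕ) : ℝ)| = |((n : ℕ) : ℝ) * s - p| := by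
    rw [← abs_of_pos hn, ← abs_mul]
    congr 1
    have hne : ((n : ℕ) : ℝ) ≠ 0 := ne_of_gt hn
    field_simp
    rw [abs_of_pos hn]
  rw [h2, h3] at h1
  exact h1

lemma large_q_bound {s ν : ℝ} (hν : 0 ≤ ν) (hfin : (badSet s ν).Finite) :
    ∃ Q0 : ℕ, 1 ≤ Q0 ∧ ∀ q : ℤ, (Q0 : ℤ) < |q| → ∀ p : ℤ,
      |(q : ℝ)| ^ (1 - ν) ≤ |(q : ℝ) * s - p| := by
  have himg : ((fun pq : ℤ × ℕ+ => (pq.2 : ℕ)) '' badSet s ν).Finite := hfin.image _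
  obtain ⟨Q0', hQ0'⟩ := himg.bddAbove
  refine ⟨max Q0' 1, le_max_right _ _, ?_⟩
  have key : ∀ (n : ℕ+) (p : ℤ), (max Q0' 1 : ℕ) < (n : ℕ) →
      ((n : ℕ) : ℝ) ^ (-ν) ≤ |s - (p : ℝ) / ((n : ℕ) : ℝ)| := by
    intro n p hn
    by_contra hc
    push_neg at hc
    have hmem : (p, n) ∈ badSet s ν := hc
    have hle : (n : ℕ) ≤ Q0' := hQ0' ⟨(p, n), hmem, rfl⟩
    have : Q0' ≤ max Q0' 1 := le_max_left _ _
    omega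
  intro q hq p
  have hqne : q ≠ 0 := by
    intro h0
    rw [h0] at hq
    simp at hq
  set n : ℕ+ := ⟨q.natAbs, Int.natAbs_pos.mpr hqne⟩ with hn
  have hnq : ((n : ℕ) : ℝ) = |(q : ℝ)| := by
    show ((q.natAbs : ℕ) : ℝ) = |(q : ℝ)|
    rw [Nat.cast_natAbs]
    exact Int.cast_abs
  have hngt : (max Q0' 1 : ℕ) < (n : ℕ) := by
    have h5 : ((n : ℕ) : ℤ) = |q| := by
      show ((q.natAbs : ℕ) : ℤ) = |q|
      exact (Int.abs_eq_natAbs q).symm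
    omega
  rcases lt_or_gt_of_ne hqne with hneg | hpos
  · have h1 := key_mul s ν n (-p) (key n (-p) hngt)
    rw [hnq] at h1
    have habs : |(q : ℝ)| = -(q : ℝ) := by
      rw [abs_of_neg]
      exact_mod_cast hneg
    have he : |(q : ℝ)| * s - ((-p : ℤ) : ℝ) = -((q : ℝ) * s - p) := by
      rw [habs]; push_cast; ring
    rw [he, abs_neg] at h1
    exact h1
  · have h1 := key_mul s ν n p (key n p hngt)
    rw [hnq] at h1
    have habs : |(q : ℝ)| = (q : ℝ) := by
      rw [abs_of_pos]
      exact_mod_cast hpos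
    rw [habs] at h1 ⊢
    exact h1

lemma shortvec_lower {s : ℝ} (ν δ : ℝ) (Q0 : ℕ) (hν : 3 ≤ ν) (hδ : 0 < δ) (hδ1 : δ ≤ 1)
    (hsmall : ∀ q : ℤ, q ≠ 0 → |q| ≤ (Q0 : ℤ) → ∀ p : ℤ, δ ≤ |(q : ℝ) * s - p|)
    (hlarge : ∀ q : ℤ, (Q0 : ℤ) < |q| → ∀ p : ℤ, |(q : ℝ)| ^ (1 - ν) ≤ |(q : ℝ) * s - p|) :
    ∃ T : ℝ, 2 ≤ T ∧ ∀ t : ℝ, T ≤ |t| → ∀ m : Fin 2 → ℤ, m ≠ 0 →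
      |t| ^ (-(1 - 1/(2*ν))) ≤ eNorm (vecOf 2 (hMat t * gMat s) m) := by
  set θ : ℝ := 1 - 1/(2*ν) with hθdef
  have hν0 : (0:ℝ) < ν := by linarith
  have hθpos : 0 < θ := by
    rw [hθdef]
    have : 1/(2*ν) ≤ 1/6 := by
      apply div_le_div_of_nonneg_left <;> linarith
    linarith
  have hθlt1 : θ < 1 := by
    rw [hθdef]
    have : 0 < 1/(2*ν) := by positivity
    linarith
  refine ⟨max (max 2 ((1/δ) ^ (1/θ))) (2 ^ (2*(ν-1))), le_trans (le_max_left _ _) (le_max_left _ _), ?_⟩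
  intro t ht m hm
  have ht2 : 2 ≤ |t| := le_trans (le_trans (le_max_left _ _) (le_max_left _ _)) ht
  have ht1 : 1 < |t| := by linarith
  have ht0 : (0:ℝ) < |t| := by linarith
  by_contra hE
  push_neg at hE
  set E := eNorm (vecOf 2 (hMat t * gMat s) m) with hEdef
  set ε : ℝ := |t| ^ (-θ) with hεdef
  have hεpos : 0 < ε := Real.rpow_pos_of_pos ht0 _
  have hε1 : ε < 1 := Real.rpow_lt_one_of_one_lt_of_neg ht1 (by linarith)
  set v := vecOf 2 (hMat t * gMat s) m with hv
  have h0 : v 0 = (m 0 : ℝ) + t * (s * m 0 + m 1) := by rw [hv, vecOf_htgs]; rfl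
  have h1 : v 1 = s * m 0 + m 1 := by rw [hv, vecOf_htgs]; rfl
  have hv0 : |v 0| < ε := lt_of_le_of_lt (abs_fst_le_eNorm v) hE
  have hv1 : |v 1| < ε := lt_of_le_of_lt (abs_snd_le_eNorm v) hE
  have hrval : v 1 = (m 0 : ℝ) * s - ((-(m 1) : ℤ) : ℝ) := by rw [h1]; push_cast; ring
  rcases eq_or_ne (m 0) 0 with hq0 | hq0
  · -- q = 0
    have hm1 : m 1 ≠ 0 := by
      intro h10
      apply hm
      funext i
      fin_cases i
      · exact hq0
      · exact h10
    have : (1:ℝ) ≤ |v 1| := by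
      rw [h1, hq0]
      push_cast
      rw [mul_zero, zero_add]
      exact_mod_cast Int.one_le_abs hm1
    linarith
  rcases le_or_gt |m 0| (Q0 : ℤ) with hqle | hqgt
  · -- small q
    have hδv : δ ≤ |v 1| := by
      rw [hrval]
      exact hsmall (m 0) hq0 hqle (-(m 1))
    -- need ε ≤ δ
    have htδ : (1/δ) ^ (1/θ) ≤ |t| := le_trans (le_trans (le_max_right _ _) (le_max_left _ _)) ht
    have h1δ : (1:ℝ) ≤ 1/δ := by
      rw [le_div_iff₀ hδ]; linarith
    have hpow : 1/δ ≤ |t| ^ θ := by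
      have := Real.rpow_le_rpow (by positivity) htδ hθpos.le
      rwa [← Real.rpow_mul (by positivity : (0:ℝ) ≤ 1/δ), one_div_mul_cancel (ne_of_gt hθpos),
        Real.rpow_one] at this
    have hεδ : ε ≤ δ := by
      rw [hεdef, Real.rpow_neg ht0.le]
      rw [inv_le_comm₀ (Real.rpow_pos_of_pos ht0 _) hδ]
      rwa [one_div] at hpow
    linarith
  · -- large q
    have hq1 : (1:ℝ) ≤ |(m 0 : ℝ)| := by
      have : (1:ℤ) ≤ |m 0| := Int.one_le_abs hq0
      have h2 : ((|m 0| : ℤ) : ℝ) = |(m 0 : ℝ)| := Int.cast_abs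
      exact_mod_cast h2 ▸ (Int.cast_le.mpr this)
    have ha : |(m 0 : ℝ)| ^ (1 - ν) < ε := by
      have := hlarge (m 0) hqgt (-(m 1))
      rw [← hrval] at this
      linarith
    have hb : |(m 0 : ℝ)| < 2 * |t| ^ (1 - θ) := by
      have he : (m 0 : ℝ) = v 0 - t * v 1 := by rw [h0, h1]; ring
      have h3 : |(m 0 : ℝ)| ≤ |v 0| + |t| * |v 1| := by
        rw [he]
        calc |v 0 - t * v 1| ≤ |v 0| + |t * v 1| := abs_sub _ _
          _ = |v 0| + |t| * |v 1| := by rw [abs_mul]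
      have h4 : |v 0| + |t| * |v 1| < ε + |t| * ε := by
        have := mul_lt_mul_of_pos_left hv1 ht0
        linarith
      have h5 : ε + |t| * ε ≤ 2 * (|t| * ε) := by nlinarith
      have h6 : |t| * ε = |t| ^ (1 - θ) := by
        rw [hεdef, show (1:ℝ) - θ = 1 + (-θ) by ring, Real.rpow_add ht0, Real.rpow_one]
      rw [← h6]
      linarith
    -- (c) |t|^(θ/(ν-1)) < |m0|
    have hν1 : (0:ℝ) < ν - 1 := by linarith
    have hc : |t| ^ (θ/(ν-1)) < |(m 0 : ℝ)| := by
      have h7 : (|(m 0 : ℝ)| ^ (1 - ν)) ^ (1/(ν-1)) < ε ^ (1/(ν-1)) :=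
        Real.rpow_lt_rpow (by positivity) ha (by positivity)
      rw [← Real.rpow_mul (abs_nonneg _)] at h7
      have h8 : (1 - ν) * (1/(ν-1)) = -1 := by field_simp; ring
      rw [h8, Real.rpow_neg_one] at h7
      rw [hεdef, ← Real.rpow_mul ht0.le] at h7
      have h9 : -θ * (1/(ν-1)) = -(θ/(ν-1)) := by ring
      rw [h9, Real.rpow_neg ht0.le] at h7
      have h10 : 0 < |t| ^ (θ/(ν-1)) := Real.rpow_pos_of_pos ht0 _
      have h11 : 0 < |(m 0 : ℝ)| := by linarith
      rw [inv_lt_inv₀ h11 h10] at h7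
      exact h7
    -- combine
    have htT : (2:ℝ) ^ (2*(ν-1)) ≤ |t| := le_trans (le_max_right _ _) ht
    have hAB : θ/(ν-1) - (1 - θ) = 1/(2*(ν-1)) := by
      rw [hθdef]
      field_simp
      ring
    have hcomb : |t| ^ (θ/(ν-1)) < 2 * |t| ^ (1-θ) := lt_trans hc hb
    have hsplit : |t| ^ (θ/(ν-1)) = |t| ^ (1-θ) * |t| ^ (θ/(ν-1) - (1-θ)) := by
      rw [← Real.rpow_add ht0]
      congr 1
      ring
    have hBpos : 0 < |t| ^ (1-θ) := Real.rpow_pos_of_pos ht0 _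
    have hlt2 : |t| ^ (θ/(ν-1) - (1-θ)) < 2 := by
      rw [hsplit] at hcomb
      nlinarith
    have hge2 : (2:ℝ) ≤ |t| ^ (θ/(ν-1) - (1-θ)) := by
      rw [hAB]
      calc (2:ℝ) = ((2:ℝ) ^ (2*(ν-1))) ^ (1/(2*(ν-1))) := by
            rw [← Real.rpow_mul (by norm_num : (0:ℝ) ≤ 2), mul_one_div_cancel (by positivity), Real.rpow_one]
        _ ≤ |t| ^ (1/(2*(ν-1))) := Real.rpow_le_rpow (by positivity) htT (by positivity)
    linarith

lemma eventual_upper {s : ℝ} (hs : Irrational s) (h : approxExp s ≠ ⊤) :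
    ∃ θ : ℝ, θ < 1 ∧ ∀ᶠ t in Filter.comap (fun t : ℝ => |t|) atTop,
      Real.log (alpha1 2 (QuotientGroup.mk (hMat t * gMat s))) / Real.log |t| ≤ θ := by
  obtain ⟨ν, hν3, hfin⟩ := badSet_finite_of_ne_top h
  obtain ⟨Q0, hQ01, hlarge⟩ := large_q_bound (by linarith : (0:ℝ) ≤ ν) hfin
  obtain ⟨δ, hδ, hδ1, hsmall⟩ := small_q_bound hs Q0
  obtain ⟨T, hT2, hTvec⟩ := shortvec_lower ν δ Q0 hν3 hδ hδ1 hsmall hlarge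
  set θ : ℝ := 1 - 1/(2*ν) with hθdef
  have hν0 : (0:ℝ) < ν := by linarith
  have hθlt1 : θ < 1 := by
    rw [hθdef]
    have : 0 < 1/(2*ν) := by positivity
    linarith
  refine ⟨θ, hθlt1, eventually_absFilter ⟨T, fun t ht => ?_⟩⟩
  have ht2 : 2 ≤ |t| := le_trans hT2 ht
  have ht0 : (0:ℝ) < |t| := by linarith
  have hlog : 0 < Real.log |t| := Real.log_pos (by linarith)
  have hαle : alpha1 2 (QuotientGroup.mk (hMat t * gMat s)) ≤ |t| ^ θ := by
    rw [alpha1_eq]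
    apply csSup_le (aSet_nonempty s t)
    rintro r ⟨m, hm, rfl⟩
    have hEge : |t| ^ (-θ) ≤ eNorm (vecOf 2 (hMat t * gMat s) m) := hTvec t ht m hm
    have hεpos : 0 < |t| ^ (-θ) := Real.rpow_pos_of_pos ht0 _
    calc 1 / eNorm (vecOf 2 (hMat t * gMat s) m) ≤ 1 / (|t| ^ (-θ)) :=
          one_div_le_one_div_of_le hεpos hEge
      _ = |t| ^ θ := by rw [Real.rpow_neg ht0.le, one_div, inv_inv]
  have hlogα : Real.log (alpha1 2 (QuotientGroup.mk (hMat t * gMat s))) ≤ θ * Real.log |t| := by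
    have h2 := Real.log_le_log (alpha1_pos s t) hαle
    rwa [Real.log_rpow ht0] at h2
  rw [div_le_iff₀ hlog]
  exact hlogα

lemma frequently_lower {s : ℝ} (hs : Irrational s) (h : approxExp s = ⊤)
    {ν : ℝ} (hν : 2 ≤ ν) :
    ∃ᶠ t in Filter.comap (fun t : ℝ => |t|) atTop,
      1 - 1/ν ≤ Real.log (alpha1 2 (QuotientGroup.mk (hMat t * gMat s))) / Real.log |t| := by
  have hν0 : (0:ℝ) < ν := by linarith
  apply frequently_absFilter
  intro a
  obtain ⟨⟨p, q⟩, hmem, hqgt⟩ := exists_large_q (by linarith : (0:ℝ) ≤ ν)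
    (badSet_infinite_of_top h ν) (max 1 ⌈a⌉₊)
  set Q : ℝ := ((q : ℕ) : ℝ) with hQdef
  have hqgt' : max 1 ⌈a⌉₊ < (q : ℕ) := hqgt
  have hq2 : 2 ≤ (q : ℕ) := by
    have := le_max_left 1 ⌈a⌉₊
    omega
  have hQ2 : (2:ℝ) ≤ Q := by rw [hQdef]; exact_mod_cast hq2
  have hQ0 : (0:ℝ) < Q := by linarith
  have haQ : a ≤ Q := by
    have h1 : a ≤ (⌈a⌉₊ : ℝ) := Nat.le_ceil a
    have h2 : (⌈a⌉₊ : ℕ) ≤ max 1 ⌈a⌉₊ := le_max_right _ _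
    have h3 : ((max 1 ⌈a⌉₊ : ℕ) : ℝ) ≤ Q := by
      rw [hQdef]; exact_mod_cast le_of_lt hqgt'
    have h4 : ((⌈a⌉₊ : ℕ) : ℝ) ≤ ((max 1 ⌈a⌉₊ : ℕ) : ℝ) := by exact_mod_cast h2
    linarith
  set r : ℝ := Q * s - p with hrdef
  have hirr : Irrational (Q * s) := by
    rw [hQdef]
    exact_mod_cast hs.natCast_mul (by omega : (q:ℕ) ≠ 0)
  have hr0 : r ≠ 0 := sub_ne_zero.mpr (hirr.ne_int p)
  have hrabs : 0 < |r| := abs_pos.mpr hr0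
  -- |r| < Q^(1-ν)
  have hrlt : |r| < Q ^ (1 - ν) := by
    have hmem' : |s - (p : ℝ) / Q| < Q ^ (-ν) := hmem
    have h1 : Q * |s - (p : ℝ) / Q| < Q * Q ^ (-ν) := by
      apply mul_lt_mul_of_pos_left hmem' hQ0
    have h2 : Q * Q ^ (-ν) = Q ^ (1 - ν) := by
      rw [show (1:ℝ) - ν = 1 + (-ν) by ring, Real.rpow_add hQ0, Real.rpow_one]
    have h3 : Q * |s - (p : ℝ) / Q| = |r| := by
      have he : Q * (s - (p:ℝ)/Q) = r := by
        rw [hrdef]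
        field_simp
      rw [← he, abs_mul, abs_of_pos hQ0]
    rw [h3, h2] at h1
    exact h1
  set t : ℝ := -(Q / r) with htdef
  have htabs : |t| = Q / |r| := by
    rw [htdef, abs_neg, abs_div, abs_of_pos hQ0]
  have hQν : Q ^ ν < |t| := by
    rw [htabs, lt_div_iff₀ hrabs]
    calc Q ^ ν * |r| < Q ^ ν * Q ^ (1-ν) := by
          exact mul_lt_mul_of_pos_left hrlt (Real.rpow_pos_of_pos hQ0 _)
      _ = Q := by rw [← Real.rpow_add hQ0]; norm_num
  have hQQν : Q ≤ Q ^ ν := by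
    nth_rewrite 1 [← Real.rpow_one Q]
    exact Real.rpow_le_rpow_of_exponent_le (by linarith) (by linarith)
  have hat : a ≤ |t| := by linarith
  refine ⟨t, hat, ?_⟩
  -- the lattice vector
  set m : Fin 2 → ℤ := ![((q : ℕ) : ℤ), -p] with hmdef
  have hm : m ≠ 0 := by
    intro h0
    have := congrFun h0 0
    simp [hmdef] at this
  have hv : vecOf 2 (hMat t * gMat s) m = ![0, r] := by
    rw [vecOf_htgs]
    have hm0 : ((m 0 : ℤ) : ℝ) = Q := by simp [hmdef, hQdef]
    have hm1 : ((m 1 : ℤ) : ℝ) = -p := by simp [hmdef]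
    rw [hm0, hm1]
    have hinner : s * Q + (-(p:ℝ)) = r := by rw [hrdef]; ring
    rw [hinner]
    have houter : Q + t * r = 0 := by
      rw [htdef]
      field_simp; ring
    rw [houter]
  have hEnorm : eNorm (vecOf 2 (hMat t * gMat s) m) = |r| := by
    rw [hv, eNorm_eq]
    norm_num [Real.sqrt_sq_eq_abs]
  have hαge : 1 / |r| ≤ alpha1 2 (QuotientGroup.mk (hMat t * gMat s)) := by
    apply le_alpha1 s t
    exact ⟨m, hm, by rw [hEnorm]⟩
  -- logs
  have ht1 : 1 < |t| := by
    have : (2:ℝ) ≤ Q ^ ν := le_trans hQ2 hQQν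
    linarith
  have hlogt : 0 < Real.log |t| := Real.log_pos ht1
  have hlogQ : 0 < Real.log Q := Real.log_pos (by linarith)
  have hlogdiv : Real.log |t| = Real.log Q - Real.log |r| := by
    rw [htabs, Real.log_div (ne_of_gt hQ0) (ne_of_gt hrabs)]
  have hlogtν : ν * Real.log Q ≤ Real.log |t| := by
    have h1 := Real.log_le_log (Real.rpow_pos_of_pos hQ0 ν) hQν.le
    rwa [Real.log_rpow hQ0] at h1
  have hlogα : Real.log |t| - Real.log Q ≤
      Real.log (alpha1 2 (QuotientGroup.mk (hMat t * gMat s))) := by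
    have h1 := Real.log_le_log (by positivity : (0:ℝ) < 1 / |r|) hαge
    rw [one_div, Real.log_inv] at h1
    linarith [hlogdiv]
  have hx : Real.log Q ≤ (1/ν) * Real.log |t| := by
    rw [div_mul_eq_mul_div, le_div_iff₀ hν0]
    linarith [hlogtν]
  rw [le_div_iff₀ hlogt]
  have hexpand : (1 - 1/ν) * Real.log |t| = Real.log |t| - (1/ν) * Real.log |t| := by ring
  rw [hexpand]
  linarith

/-- For irrational `s`, `limsup_{|t|→∞} log α₁(h_t Λ_s)/log|t| = 1` if and only if
`s` is a Liouville number, i.e. `μ(s) = ∞`. -/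
theorem liouville_characterization (s : ℝ) (hs : Irrational s) :
    Filter.limsup
        (fun t : ℝ => Real.log (alpha1 2 (QuotientGroup.mk (hMat t * gMat s))) / Real.log |t|)
        (Filter.comap (fun t : ℝ => |t|) atTop) = 1 ↔ approxExp s = ⊤ := by
  have hlb : ∀ᶠ t in Filter.comap (fun t : ℝ => |t|) atTop,
      -2 ≤ Real.log (alpha1 2 (QuotientGroup.mk (hMat t * gMat s))) / Real.log |t| :=
    eventually_absFilter ⟨2, fun t ht => F_ge_neg_two s t ht⟩
  have hub2 : ∀ᶠ t in Filter.comap (fun t : ℝ => |t|) atTop,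
      Real.log (alpha1 2 (QuotientGroup.mk (hMat t * gMat s))) / Real.log |t| ≤ 2 := by
    obtain ⟨T, hT⟩ := F_le_one_add s one_pos
    exact eventually_absFilter ⟨T, fun t ht => le_trans (hT t ht) (by norm_num)⟩
  constructor
  · intro hlim
    by_contra hne
    obtain ⟨θ, hθ1, hev⟩ := eventual_upper hs hne
    have hle := my_limsup_le hev hlb
    rw [hlim] at hle
    linarith
  · intro htop
    apply le_antisymm
    · apply _root_.le_of_forall_pos_le_add
      intro ε hε
      obtain ⟨T, hT⟩ := F_le_one_add s hε
      exact my_limsup_le (eventually_absFilter ⟨T, hT⟩) hlb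
    · apply _root_.le_of_forall_pos_le_add
      intro ε hε
      set ν : ℝ := max 2 (1/ε) with hνdef
      have hν2 : (2:ℝ) ≤ ν := le_max_left _ _
      have hνε : 1/ε ≤ ν := le_max_right _ _
      have h1 := le_my_limsup (frequently_lower hs htop hν2) hub2
      have hν0 : (0:ℝ) < ν := by linarith
      have h2 : 1/ν ≤ ε := by
        rw [div_le_iff₀ hν0]
        calc (1:ℝ) = ε * (1/ε) := by field_simp
          _ ≤ ε * ν := by exact mul_le_mul_of_nonneg_left hνε hε.le
      linarith
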